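/- Let v : ℝ → E (a normed space) be twice continuously differentiable with ‖v''(s)‖ ≤ K for s ∈ [0, ΔT], and let ρ : [0,1] → ℝ be continuous with ∫₀¹ ρ(s) ds = 1. Then ‖(1/ΔT)∫₀^{ΔT} ρ(s/ΔT) v'(s) ds − v'(0)‖ ≤ K ΔT ∫₀¹ |ρ(s)| s ds. -/

import Mathlib

open Set

theorem moving_average_derivative_error
    {E : Type*} [NormedAddCommGroup E] [NormedSpace ℝ E] [CompleteSpace E]
    (v : ℝ → E) (hv : ContDiff ℝ 2 v)
    (K ΔT : ℝ) (hΔT : 0 < ΔT)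
    (hK : ∀ s ∈ Icc (0:ℝ) ΔT, ‖iteratedDeriv 2 v s‖ ≤ K)
    (ρ : ℝ → ℝ) (hρ : ContinuousOn ρ (Icc 0 1))
    (hnorm : ∫ u in (0:ℝ)..1, ρ u = 1) :
    ‖ΔT⁻¹ • (∫ t in (0:ℝ)..ΔT, ρ (t / ΔT) • deriv v t) - deriv v 0‖ ≤
      K * ΔT * ∫ u in (0:ℝ)..1, |ρ u| * u := by
  have hΔT' : ΔT ≠ 0 := hΔT.ne'
  -- derivative facts
  have hv2 : ContDiff ℝ ((1:WithTop ℕ∞) + 1) v := by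
    have : ((1:WithTop ℕ∞) + 1) = 2 := by norm_num
    rw [this]; exact hv
  rw [contDiff_succ_iff_deriv] at hv2
  have hdv : ContDiff ℝ 1 (deriv v) := hv2.2.2
  have hdiffdv : Differentiable ℝ (deriv v) := hdv.differentiable one_ne_zero
  have hcontdv : Continuous (deriv v) := hdiffdv.continuous
  have hK0 : 0 ≤ K := le_trans (norm_nonneg _) (hK 0 ⟨le_rfl, hΔT.le⟩)
  -- MVT bound on deriv v over [0, ΔT]
  have hMVT : ∀ y ∈ Icc (0:ℝ) ΔT, ‖deriv v y - deriv v 0‖ ≤ K * y := by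
    intro y hy
    have h := Convex.norm_image_sub_le_of_norm_hasDerivWithin_le
      (f := deriv v) (f' := deriv (deriv v)) (s := Icc (0:ℝ) ΔT) (C := K)
      (fun x _ => (hdiffdv x).hasDerivAt.hasDerivWithinAt)
      (fun x hx => by
        have : iteratedDeriv 2 v x = deriv (deriv v) x := by
          rw [iteratedDeriv_succ, iteratedDeriv_one]
        rw [← this]; exact hK x hx)
      (convex_Icc _ _) ⟨le_rfl, hΔT.le⟩ hy
    simpa [abs_of_nonneg hy.1] using h
  -- change of variables
  have hcov : ΔT⁻¹ • (∫ t in (0:ℝ)..ΔT, ρ (t / ΔT) • deriv v t)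
      = ∫ u in (0:ℝ)..1, ρ u • deriv v (ΔT * u) := by
    have := intervalIntegral.smul_integral_comp_mul_left
      (a := (0:ℝ)) (b := 1) (fun t => ρ (t / ΔT) • deriv v t) ΔT
    rw [mul_zero, mul_one] at this
    rw [← this, smul_smul, inv_mul_cancel₀ hΔT', one_smul]
    refine intervalIntegral.integral_congr fun u _ => ?_
    rw [mul_div_cancel_left₀ _ hΔT']
  have hv0 : deriv v 0 = ∫ u in (0:ℝ)..1, ρ u • deriv v 0 := by
    rw [intervalIntegral.integral_smul_const, hnorm, one_smul]
  -- integrability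
  have hi1 : IntervalIntegrable (fun u => ρ u • deriv v (ΔT * u)) MeasureTheory.volume 0 1 := by
    apply ContinuousOn.intervalIntegrable
    rw [uIcc_of_le zero_le_one]
    exact (hρ.smul ((hcontdv.comp (continuous_const.mul continuous_id)).continuousOn))
  have hi2 : IntervalIntegrable (fun u => ρ u • deriv v 0) MeasureTheory.volume 0 1 := by
    apply ContinuousOn.intervalIntegrable
    rw [uIcc_of_le zero_le_one]
    exact hρ.smul continuousOn_const
  rw [hcov, hv0, ← intervalIntegral.integral_sub hi1 hi2]
  have hkey : ∀ u ∈ Icc (0:ℝ) 1,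
      ‖ρ u • deriv v (ΔT * u) - ρ u • deriv v 0‖ ≤ K * ΔT * (|ρ u| * u) := by
    intro u hu
    rw [← smul_sub, norm_smul, Real.norm_eq_abs]
    have hmem : ΔT * u ∈ Icc (0:ℝ) ΔT :=
      ⟨mul_nonneg hΔT.le hu.1, by nlinarith [hu.2]⟩
    calc |ρ u| * ‖deriv v (ΔT * u) - deriv v 0‖
        ≤ |ρ u| * (K * (ΔT * u)) := by
          exact mul_le_mul_of_nonneg_left (hMVT _ hmem) (abs_nonneg _)
      _ = K * ΔT * (|ρ u| * u) := by ring
  have hgint : IntervalIntegrable (fun u => K * ΔT * (|ρ u| * u)) MeasureTheory.volume 0 1 := by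
    apply ContinuousOn.intervalIntegrable
    rw [uIcc_of_le zero_le_one]
    exact continuousOn_const.mul ((hρ.abs).mul continuousOn_id)
  have := intervalIntegral.norm_integral_le_of_norm_le
    (f := fun u => ρ u • deriv v (ΔT * u) - ρ u • deriv v 0)
    (g := fun u => K * ΔT * (|ρ u| * u)) (μ := MeasureTheory.volume) (a := 0) (b := 1)
    zero_le_one (by
      exact Filter.Eventually.of_forall
        fun u hu => hkey u ⟨hu.1.le, hu.2⟩) hgint
  refine this.trans (le_of_eq ?_)
  rw [intervalIntegral.integral_const_mul]
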